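/- Let N ≥ 1 and θ ∈ ℝ with ¬(θ = 0 ∧ N even). If x : ℤ/N → ℝ satisfies (1 − θ)·x_j + (1 + θ)·x_{j−1} = 0 for every j ∈ ℤ/N, then x_j = 0 for all j. Consequently, at full coupling γ = 1 (and excluding the case θ = 0 with N even), the edge conditions (2.3) are equivalent to continuity of the field and the flux between adjacent elements: u_j^R = u_{j+1}^L and f_j^R = f_{j+1}^L for all j. -/

import Mathlib

lemma cyclic_zero (N : ℕ) [NeZero N] (θ : ℝ) (h : ¬ (θ = 0 ∧ Even N))
    (x : ZMod N → ℝ)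
    (hx : ∀ j : ZMod N, (1 - θ) * x j + (1 + θ) * x (j - 1) = 0) :
    ∀ j : ZMod N, x j = 0 := by
  by_cases h1 : θ = 1
  · intro j
    have := hx (j + 1)
    simp [h1] at this
    simpa using this
  by_cases h2 : θ = -1
  · intro j
    have := hx j
    simp [h2] at this
    linarith
  have hne : (1 : ℝ) - θ ≠ 0 := by intro hc; apply h1; linarith
  set r : ℝ := -(1 + θ) / (1 - θ) with hr
  have hrec : ∀ j : ZMod N, x j = r * x (j - 1) := by
    intro j
    have := hx j
    rw [hr, div_mul_eq_mul_div, eq_div_iff hne]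
    linear_combination this
  have hiter : ∀ k : ℕ, ∀ j : ZMod N, x j = r ^ k * x (j - k) := by
    intro k
    induction k with
    | zero => intro j; simp
    | succ n ih =>
      intro j
      rw [ih j, hrec (j - n)]
      push_cast
      rw [sub_sub]
      ring
  intro j
  have hN := hiter N j
  rw [ZMod.natCast_self, sub_zero] at hN
  have hpow : r ^ N ≠ 1 := by
    intro hc
    rcases (pow_eq_one_iff_of_ne_zero (NeZero.ne N)).mp hc with hr1 | ⟨hrm1, hev⟩
    · rw [hr, div_eq_one_iff_eq hne] at hr1
      linarith
    · rw [hr, div_eq_iff hne] at hrm1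
      exact h ⟨by linarith, hev⟩
  have : (r ^ N - 1) * x j = 0 := by linarith [hN]
  rcases mul_eq_zero.mp this with h' | h'
  · exact absurd (by linarith) hpow
  · exact h'

theorem full_coupling_continuity
    (N : ℕ) [NeZero N] (θ : ℝ) (h : ¬ (θ = 0 ∧ Even N)) :
    (∀ x : ZMod N → ℝ,
      (∀ j : ZMod N, (1 - θ) * x j + (1 + θ) * x (j - 1) = 0) →
      ∀ j : ZMod N, x j = 0) ∧
    (∀ uR uL fR fL : ZMod N → ℝ,
      (∀ j : ZMod N, (1 - 1 / 2) * (uR j - uL j) =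
        (1 / 2) * (uL (j + 1) - uR (j - 1))
        + (θ / 2) * (uL j + uR j)
        - (θ / 2) * (uL (j + 1) + uR (j - 1))) →
      (∀ j : ZMod N, (1 - 1 / 2) * (fR j - fL j) =
        (1 / 2) * (fL (j + 1) - fR (j - 1))
        - (θ / 2) * (fL j + fR j)
        + (θ / 2) * (fL (j + 1) + fR (j - 1))) →
      ∀ j : ZMod N, uR j = uL (j + 1) ∧ fR j = fL (j + 1)) := by
  constructor
  · exact cyclic_zero N θ h
  · intro uR uL fR fL hu hf j
    have h' : ¬ (-θ = 0 ∧ Even N) := by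
      intro ⟨h1, h2⟩; exact h ⟨by linarith, h2⟩
    have hx := cyclic_zero N θ h (fun j => uR j - uL (j + 1)) ?_ j
    · have hy := cyclic_zero N (-θ) h' (fun j => fR j - fL (j + 1)) ?_ j
      · constructor <;> [skip; skip]
        · linarith [hx]
        · linarith [hy]
      · intro i
        have := hf i
        have e : i - 1 + 1 = i := by ring
        rw [e]
        linear_combination 2 * this
    · intro i
      have := hu i
      have e : i - 1 + 1 = i := by ring
      rw [e]
      linear_combination 2 * this
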